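/- Let Q be a continuous symmetric bilinear form on a finite-dimensional real vector space V and w ∈ V with Q(w, w) > 0. Suppose (v_i) is a sequence of vectors with ‖v_i‖ → ∞, Q(v_i, v_i) > 0 for all i, Q(v_i, w) bounded above, Q(v_i, w) ≥ 0, and Q is negative definite on the orthogonal complement {u : Q(u, w) = 0} (Hodge–Riemann type signature). Then v_i/‖v_i‖ has no convergent subsequence with nonzero limit; in particular such a sequence cannot exist if the unit sphere is compact. (Equivalently: the set of v with Q(v,v) > 0, Q(v,w) bounded is bounded.) -/

import Mathlib

/-- Hodge–Riemann type boundedness: if a symmetric bilinear form `Q` on a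
finite-dimensional real normed space satisfies `Q w w > 0` and is negative
definite on `{u | Q u w = 0}`, then for any `A` the set
`{v | Q v v ≥ 0, 0 ≤ Q v w ≤ A}` is bounded. -/
theorem hodge_riemann_boundedness
    {V : Type*} [NormedAddCommGroup V] [NormedSpace ℝ V]
    [FiniteDimensional ℝ V]
    (Q : V →ₗ[ℝ] V →ₗ[ℝ] ℝ) (hsymm : ∀ u v, Q u v = Q v u)
    (w : V) (hw : 0 < Q w w)
    (hneg : ∀ u : V, Q u w = 0 → u ≠ 0 → Q u u < 0)
    (A : ℝ) :
    Bornology.IsBounded {v : V | 0 ≤ Q v v ∧ 0 ≤ Q v w ∧ Q v w ≤ A} := by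
  have h1 : Continuous fun u : V =>
      (LinearMap.toContinuousLinearMap (Q u) : V →L[ℝ] ℝ) :=
    (((LinearMap.toContinuousLinearMap :
        (V →ₗ[ℝ] ℝ) ≃ₗ[ℝ] (V →L[ℝ] ℝ)).toLinearMap.comp Q)).continuous_of_finiteDimensional
  have hQcont : Continuous fun u : V => Q u u := by
    simpa using h1.clm_apply continuous_id
  have hgcont : Continuous fun u : V => Q u w := (Q.flip w).continuous_of_finiteDimensional
  obtain ⟨c, hc, hcineq⟩ : ∃ c > 0, ∀ u : V, Q u w = 0 → Q u u ≤ -(c * ‖u‖^2) := by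
    set S : Set V := {u | Q u w = 0} ∩ Metric.sphere 0 1 with hS
    by_cases hSe : S = ∅
    · refine ⟨1, one_pos, fun u hu => ?_⟩
      by_cases h0 : u = 0
      · simp [h0]
      · exfalso
        have : (‖u‖⁻¹ • u) ∈ S := by
          refine ⟨by simp [hu], ?_⟩
          have hn : ‖u‖ ≠ 0 := norm_ne_zero_iff.mpr h0
          simp [norm_smul, abs_of_nonneg (inv_nonneg.mpr (norm_nonneg u)),
            inv_mul_cancel₀ hn]
        rw [hSe] at this; exact this
    · have hSne : S.Nonempty := Set.nonempty_iff_ne_empty.mpr hSe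
      have hclosed : IsClosed S :=
        (isClosed_eq hgcont continuous_const).inter Metric.isClosed_sphere
      have hbdd : Bornology.IsBounded S :=
        (Metric.isBounded_sphere).subset Set.inter_subset_right
      have hcpt : IsCompact S := Metric.isCompact_of_isClosed_isBounded hclosed hbdd
      obtain ⟨u0, hu0S, hmin⟩ := hcpt.exists_isMinOn hSne (hQcont.neg.continuousOn)
      set m := -Q u0 u0 with hm
      have hm0 : 0 < m := by
        have h0 : u0 ≠ 0 := by
          intro h; rw [h] at hu0S; simpa using hu0S.2
        have := hneg u0 hu0S.1 h0
        linarith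
      refine ⟨m, hm0, fun u hu => ?_⟩
      by_cases h0 : u = 0
      · simp [h0]
      · have hn : ‖u‖ ≠ 0 := norm_ne_zero_iff.mpr h0
        have hnpos : 0 < ‖u‖ := lt_of_le_of_ne (norm_nonneg u) (Ne.symm hn)
        have hmem : (‖u‖⁻¹ • u) ∈ S := by
          refine ⟨by simp [hu], ?_⟩
          simp [norm_smul, abs_of_nonneg (inv_nonneg.mpr (norm_nonneg u)),
            inv_mul_cancel₀ hn]
        have hv : m ≤ -Q (‖u‖⁻¹ • u) (‖u‖⁻¹ • u) := hmin hmem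
        have hexp : Q (‖u‖⁻¹ • u) (‖u‖⁻¹ • u) = ‖u‖⁻¹ * (‖u‖⁻¹ * Q u u) := by
          simp [map_smul]
        rw [hexp] at hv
        have h2 := mul_le_mul_of_nonneg_right hv (le_of_lt (by positivity : (0:ℝ) < ‖u‖^2))
        have h4 : ‖u‖⁻¹ * (‖u‖⁻¹ * Q u u) * ‖u‖ ^ 2 = Q u u := by
          have h5 : ‖u‖⁻¹ * (‖u‖⁻¹ * Q u u) * ‖u‖ ^ 2 = Q u u * (‖u‖⁻¹ * ‖u‖)^2 := by ring
          rw [h5, inv_mul_cancel₀ hn]; ring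
        nlinarith [h2, h4]
  set B := max A 0 / Q w w with hB
  have hB0 : 0 ≤ B := by positivity
  set R := Real.sqrt (B^2 * Q w w / c) + B * ‖w‖ with hR
  rw [Metric.isBounded_iff_subset_closedBall 0]
  refine ⟨R, fun v hv => ?_⟩
  obtain ⟨hvv, hvw0, hvwA⟩ := hv
  set t := Q v w / Q w w with ht
  have ht0 : 0 ≤ t := by positivity
  have htB : t ≤ B := by
    rw [ht, hB]
    gcongr
    exact hvwA.trans (le_max_left _ _)
  set u := v - t • w with hu
  have huw : Q u w = 0 := by
    simp only [hu, map_sub, map_smul, LinearMap.sub_apply, LinearMap.smul_apply,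
      smul_eq_mul, ht]
    field_simp
    ring
  have hQuu : Q u u ≤ -(c * ‖u‖^2) := hcineq u huw
  have hexpand : Q v v = Q u u + t^2 * Q w w := by
    have hv' : v = u + t • w := by simp [hu]
    rw [hv']
    simp only [map_add, map_smul, LinearMap.add_apply, LinearMap.smul_apply, smul_eq_mul]
    have h1 := hsymm w u
    nlinarith [huw]
  have hu2 : c * ‖u‖^2 ≤ t^2 * Q w w := by nlinarith
  have hu2' : ‖u‖^2 ≤ B^2 * Q w w / c := by
    rw [le_div_iff₀ hc]
    have htB2 : t^2 ≤ B^2 := by nlinarith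
    have := mul_le_mul_of_nonneg_right htB2 hw.le
    linarith
  have hunorm : ‖u‖ ≤ Real.sqrt (B^2 * Q w w / c) :=
    Real.le_sqrt (norm_nonneg u) (by positivity) |>.mpr hu2'
  have hfinal : ‖v‖ ≤ R := by
    calc ‖v‖ = ‖u + t • w‖ := by simp [hu]
      _ ≤ ‖u‖ + ‖t • w‖ := norm_add_le _ _
      _ ≤ Real.sqrt (B^2 * Q w w / c) + B * ‖w‖ := by
          rw [norm_smul, Real.norm_eq_abs, abs_of_nonneg ht0]
          gcongr
      _ = R := rfl
  simpa [Metric.mem_closedBall, dist_eq_norm] using hfinal
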